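/- Suppose i < n satisfies max(DY i) = α and min(DY i) ≤ β. Then: (1) every value v ∈ DY i with v > β is consistent; (2) for every value v ∈ DY i with v < β, v is inconsistent if and only if cx(α) + 1 = cy(α) and γ holds; (3) if β ∈ DY i, then β is inconsistent if and only if cx(α) + 1 = cy(α), γ holds, and either cx(β) > cy(β) + 1, or (cx(β) = cy(β) + 1 and σ holds). -/

import Mathlib

namespace MsetPaper

/-- The maximum element of a multiset of naturals (`0` for the empty multiset). -/
def mmax (s : Multiset ℕ) : ℕ := s.sup

/-- The strict multiset order `x <ₘ y` of the paper: either `x` is empty and `y` is not,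
or both are nonempty and either `max x < max y`, or the maxima agree and the multisets
with one occurrence of the maximum removed are again strictly ordered. -/
inductive MLt : Multiset ℕ → Multiset ℕ → Prop
  | empty {y : Multiset ℕ} : y ≠ 0 → MLt 0 y
  | maxLt {x y : Multiset ℕ} : x ≠ 0 → y ≠ 0 → mmax x < mmax y → MLt x y
  | maxEq {x y : Multiset ℕ} : x ≠ 0 → y ≠ 0 → mmax x = mmax y →
      MLt (x.erase (mmax x)) (y.erase (mmax y)) → MLt x y

/-- The (non-strict) multiset order `x ≤ₘ y`. -/
def MLe (x y : Multiset ℕ) : Prop := MLt x y ∨ x = y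

/-- The multiset of values taken by a vector. -/
def msetOf {n : ℕ} (x : Fin n → ℕ) : Multiset ℕ := (List.ofFn x : List ℕ)

/-- `(x, y)` is a satisfying assignment for the constraint `X ≤ₘ Y`. -/
def SatLe {n : ℕ} (DX DY : Fin n → Finset ℕ) (x y : Fin n → ℕ) : Prop :=
  (∀ i, x i ∈ DX i) ∧ (∀ i, y i ∈ DY i) ∧ MLe (msetOf x) (msetOf y)

/-- The value `v` is consistent for the variable `X i`. -/
def ConsX {n : ℕ} (DX DY : Fin n → Finset ℕ) (i : Fin n) (v : ℕ) : Prop :=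
  ∃ x y, SatLe DX DY x y ∧ x i = v

/-- The value `v` is consistent for the variable `Y i`. -/
def ConsY {n : ℕ} (DX DY : Fin n → Finset ℕ) (i : Fin n) (v : ℕ) : Prop :=
  ∃ x y, SatLe DX DY x y ∧ y i = v

/-- The constraint `X ≤ₘ Y` is generalised arc-consistent. -/
def GACLe {n : ℕ} (DX DY : Fin n → Finset ℕ) : Prop :=
  (∀ i, ∀ v ∈ DX i, ConsX DX DY i v) ∧ (∀ i, ∀ v ∈ DY i, ConsY DX DY i v)

/-- `cx DX hDX v` counts the indices `i` with `min (DX i) = v`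
(the occurrence vector of `floor(X)`). -/
def cx {n : ℕ} (DX : Fin n → Finset ℕ) (hDX : ∀ i, (DX i).Nonempty) (v : ℕ) : ℕ :=
  (Finset.univ.filter fun i => (DX i).min' (hDX i) = v).card

/-- `cy DY hDY v` counts the indices `i` with `max (DY i) = v`
(the occurrence vector of `ceiling(Y)`). -/
def cy {n : ℕ} (DY : Fin n → Finset ℕ) (hDY : ∀ i, (DY i).Nonempty) (v : ℕ) : ℕ :=
  (Finset.univ.filter fun i => (DY i).max' (hDY i) = v).card

lemma mmax_mem {s : Multiset ℕ} (h : s ≠ 0) : mmax s ∈ s := by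
  induction s using Multiset.induction_on with
  | empty => exact absurd rfl h
  | cons a t ih =>
    rcases eq_or_ne t 0 with rfl | ht
    · simp [mmax]
    · have hc : mmax (a ::ₘ t) = max a (mmax t) := by
        simp [mmax, Multiset.sup_cons]
      rcases le_total (mmax t) a with hle | hle
      · rw [hc, max_eq_left hle]; exact Multiset.mem_cons_self a t
      · rw [hc, max_eq_right hle]; exact Multiset.mem_cons_of_mem (ih ht)

lemma le_mmax {s : Multiset ℕ} {a : ℕ} (h : a ∈ s) : a ≤ mmax s := Multiset.le_sup h

lemma count_eq_zero_of_mmax_lt {s : Multiset ℕ} {w : ℕ} (h : mmax s < w) :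
    s.count w = 0 := by
  rw [Multiset.count_eq_zero]
  intro hw
  exact absurd (le_mmax hw) (not_le.mpr h)

def Char (a b : Multiset ℕ) : Prop :=
  ∃ v, a.count v < b.count v ∧ ∀ w, v < w → a.count w = b.count w

lemma one_le_count_mmax {s : Multiset ℕ} (h : s ≠ 0) : 1 ≤ s.count (mmax s) :=
  Multiset.one_le_count_iff_mem.mpr (mmax_mem h)

lemma char_of_mlt {a b : Multiset ℕ} (h : MLt a b) : Char a b := by
  induction h with
  | @empty y hy =>
    refine ⟨mmax y, ?_, fun w hw => ?_⟩
    · exact lt_of_lt_of_le (by simp) (one_le_count_mmax hy)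
    · simp [count_eq_zero_of_mmax_lt hw]
  | @maxLt x y hx hy hlt =>
    refine ⟨mmax y, ?_, fun w hw => ?_⟩
    · rw [count_eq_zero_of_mmax_lt hlt]
      exact lt_of_lt_of_le (by simp) (one_le_count_mmax hy)
    · rw [count_eq_zero_of_mmax_lt hw, count_eq_zero_of_mmax_lt (hlt.trans hw)]
  | @maxEq x y hx hy heq _ ih =>
    obtain ⟨v, h1, h2⟩ := ih
    rw [← heq] at h1 h2
    set M := mmax x with hM
    have hmx : 1 ≤ x.count M := one_le_count_mmax hx
    have hmy : 1 ≤ y.count M := heq ▸ one_le_count_mmax hy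
    have hy0 : ∀ w, M < w → y.count w = 0 := fun w hw =>
      count_eq_zero_of_mmax_lt (heq ▸ hw)
    have hx0 : ∀ w, M < w → x.count w = 0 := fun w hw => count_eq_zero_of_mmax_lt hw
    rcases lt_trichotomy v M with hv | hv | hv
    · refine ⟨v, ?_, fun w hw => ?_⟩
      · rwa [Multiset.count_erase_of_ne hv.ne, Multiset.count_erase_of_ne hv.ne] at h1
      · rcases eq_or_ne w M with rfl | hne
        · have := h2 _ hv
          rw [Multiset.count_erase_self, Multiset.count_erase_self] at this
          omega
        · have := h2 _ hw
          rwa [Multiset.count_erase_of_ne hne, Multiset.count_erase_of_ne hne] at this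
    · rw [hv] at h1 h2
      refine ⟨M, ?_, fun w hw => ?_⟩
      · rw [Multiset.count_erase_self, Multiset.count_erase_self] at h1
        omega
      · rw [hx0 _ hw, hy0 _ hw]
    · exfalso
      have h0 : y.count v = 0 := hy0 _ hv
      have hle : (y.erase M).count v ≤ y.count v :=
        Multiset.count_le_of_le _ (Multiset.erase_le _ _)
      omega

lemma mlt_of_char_aux : ∀ k : ℕ, ∀ a b : Multiset ℕ, Multiset.card b ≤ k → Char a b → MLt a b := by
  intro k
  induction k with
  | zero =>
    intro a b hcard ⟨v, h1, _⟩
    have hv : v ∈ b := by rw [← Multiset.count_pos]; omega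
    have hb : b ≠ 0 := fun h0 => by simp [h0] at hv
    have := Multiset.card_pos.mpr hb
    omega
  | succ k ih =>
    intro a b hcard ⟨v, h1, h2⟩
    have hvb : v ∈ b := by rw [← Multiset.count_pos]; omega
    have hbne : b ≠ 0 := fun h0 => by simp [h0] at hvb
    rcases eq_or_ne a 0 with rfl | hane
    · exact MLt.empty hbne
    · have hma : mmax a ∈ a := mmax_mem hane
      have hle : mmax a ≤ mmax b := by
        rcases le_or_gt (mmax a) v with h' | h'
        · exact h'.trans (le_mmax hvb)
        · have hc : b.count (mmax a) = a.count (mmax a) := (h2 _ h').symm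
          have : mmax a ∈ b := by
            rw [← Multiset.count_pos, hc, Multiset.count_pos]; exact hma
          exact le_mmax this
      rcases lt_or_eq_of_le hle with hlt | heq
      · exact MLt.maxLt hane hbne hlt
      · have hmb : mmax b ∈ b := mmax_mem hbne
        have hcard' : Multiset.card (b.erase (mmax b)) ≤ k := by
          rw [Multiset.card_erase_of_mem hmb, Nat.pred_eq_sub_one]
          have : 0 < Multiset.card b := Multiset.card_pos.mpr hbne
          omega
        set M := mmax b with hM
        have hvm : v ≤ M := le_mmax hvb
        have hca : 1 ≤ a.count M := heq ▸ Multiset.one_le_count_iff_mem.mpr hma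
        have hcb : 1 ≤ b.count M := one_le_count_mmax hbne
        refine MLt.maxEq hane hbne heq ?_
        rw [heq, ← hM]
        refine ih _ _ hcard' ?_
        rcases eq_or_lt_of_le hvm with hveq | hvlt
        · rw [hveq] at h1 h2
          refine ⟨M, ?_, fun w hw => ?_⟩
          · rw [Multiset.count_erase_self, Multiset.count_erase_self]
            omega
          · rw [Multiset.count_erase_of_ne (by omega), Multiset.count_erase_of_ne (by omega)]
            exact h2 _ hw
        · refine ⟨v, ?_, fun w hw => ?_⟩
          · rwa [Multiset.count_erase_of_ne (by omega), Multiset.count_erase_of_ne (by omega)]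
          · rcases eq_or_ne w M with rfl | hne
            · rw [Multiset.count_erase_self, Multiset.count_erase_self, h2 _ hw]
            · rw [Multiset.count_erase_of_ne hne, Multiset.count_erase_of_ne hne]
              exact h2 _ hw

lemma mlt_iff_char {a b : Multiset ℕ} : MLt a b ↔ Char a b :=
  ⟨char_of_mlt, fun h => mlt_of_char_aux (Multiset.card b) a b le_rfl h⟩

lemma mlt_of_char {a b : Multiset ℕ} (h : Char a b) : MLt a b := mlt_iff_char.mpr h

lemma mlt_asymm {a b : Multiset ℕ} (h : MLt a b) (h' : MLt b a) : False := by
  obtain ⟨v, h1, h2⟩ := char_of_mlt h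
  obtain ⟨w, g1, g2⟩ := char_of_mlt h'
  rcases lt_trichotomy v w with hvw | rfl | hvw
  · have := h2 _ hvw; omega
  · omega
  · have := g2 _ hvw; omega

lemma mlt_ne {a b : Multiset ℕ} (h : MLt a b) : a ≠ b := by
  obtain ⟨v, h1, _⟩ := char_of_mlt h
  intro he; rw [he] at h1; omega

lemma not_mle_of_mlt {a b : Multiset ℕ} (h : MLt b a) : ¬ MLe a b := by
  rintro (h' | rfl)
  · exact mlt_asymm h' h
  · exact mlt_ne h rfl

lemma mlt_trans {a b c : Multiset ℕ} (h : MLt a b) (h' : MLt b c) : MLt a c := by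
  rw [mlt_iff_char] at *
  obtain ⟨v, h1, h2⟩ := h
  obtain ⟨w, g1, g2⟩ := h'
  rcases lt_trichotomy v w with hvw | rfl | hvw
  · exact ⟨w, by rw [h2 _ hvw]; exact g1, fun u hu => (h2 _ (hvw.trans hu)).trans (g2 _ hu)⟩
  · exact ⟨v, by omega, fun u hu => (h2 _ hu).trans (g2 _ hu)⟩
  · exact ⟨v, by rw [← g2 _ hvw]; exact h1, fun u hu => (h2 _ hu).trans (g2 _ (hvw.trans hu))⟩

lemma mle_trans {a b c : Multiset ℕ} (h : MLe a b) (h' : MLe b c) : MLe a c := by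
  rcases h with h | rfl
  · rcases h' with h' | rfl
    · exact Or.inl (mlt_trans h h')
    · exact Or.inl h
  · exact h'

lemma mle_cons {c c' : ℕ} {s t : Multiset ℕ} (hcc : c ≤ c') (hst : MLe s t) :
    MLe (c ::ₘ s) (c' ::ₘ t) := by
  rcases hst with hst | rfl
  · obtain ⟨v, h1, h2⟩ := char_of_mlt hst
    left
    rw [mlt_iff_char]
    rcases le_or_gt c' v with hc'v | hvc'
    · refine ⟨v, ?_, fun w hw => ?_⟩
      · rw [Multiset.count_cons, Multiset.count_cons]
        have : (if v = c then 1 else 0) ≤ if v = c' then 1 else 0 := by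
          rcases eq_or_ne v c with rfl | hne
          · simp [le_antisymm hc'v hcc]
          · simp [hne]
        omega
      · rw [Multiset.count_cons, Multiset.count_cons, h2 _ hw,
          if_neg (by omega), if_neg (by omega)]
    · rcases eq_or_ne c c' with rfl | hne
      · refine ⟨v, ?_, fun w hw => ?_⟩
        · rw [Multiset.count_cons, Multiset.count_cons]; omega
        · rw [Multiset.count_cons, Multiset.count_cons, h2 _ hw]
      · refine ⟨c', ?_, fun w hw => ?_⟩
        · rw [Multiset.count_cons, Multiset.count_cons, h2 _ hvc',
            if_neg (by omega), if_pos rfl]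
          omega
        · rw [Multiset.count_cons, Multiset.count_cons, h2 _ (hvc'.trans hw),
            if_neg (by omega), if_neg (by omega)]
  · rcases eq_or_ne c c' with rfl | hne
    · exact Or.inr rfl
    · left
      rw [mlt_iff_char]
      refine ⟨c', ?_, fun w hw => ?_⟩
      · rw [Multiset.count_cons, Multiset.count_cons, if_neg (by omega), if_pos rfl]
        omega
      · rw [Multiset.count_cons, Multiset.count_cons, if_neg (by omega), if_neg (by omega)]

lemma mle_map_mono {ι : Type*} (s : Multiset ι) (f g : ι → ℕ) (h : ∀ j, f j ≤ g j) :
    MLe (s.map f) (s.map g) := by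
  induction s using Multiset.induction_on with
  | empty => exact Or.inr rfl
  | cons a t ih =>
    rw [Multiset.map_cons, Multiset.map_cons]
    exact mle_cons (h a) ih

lemma msetOf_eq_map {n : ℕ} (x : Fin n → ℕ) :
    msetOf x = Multiset.map x Finset.univ.val := by
  simp [msetOf, List.ofFn_eq_map, Fin.univ_def]

lemma count_msetOf {n : ℕ} (x : Fin n → ℕ) (w : ℕ) :
    (msetOf x).count w = (Finset.univ.filter fun j => x j = w).card := by
  rw [msetOf_eq_map, Multiset.count_map]
  have h : (Finset.univ.filter fun j => x j = w) = (Finset.univ.filter fun j => w = x j) := by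
    apply Finset.filter_congr; intro j _; simp [eq_comm]
  rw [h, Finset.card, Finset.filter_val]

lemma mle_msetOf_mono {n : ℕ} (f g : Fin n → ℕ) (h : ∀ j, f j ≤ g j) :
    MLe (msetOf f) (msetOf g) := by
  rw [msetOf_eq_map, msetOf_eq_map]
  exact mle_map_mono _ f g h

/-- counting a filter over `univ`, singling out the index `i` -/
lemma card_filter_split {n : ℕ} (i : Fin n) (p q : Fin n → Prop)
    [DecidablePred p] [DecidablePred q]
    (hpq : ∀ j, j ≠ i → (p j ↔ q j)) :
    (Finset.univ.filter p).card + (if q i then 1 else 0)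
      = (Finset.univ.filter q).card + (if p i then 1 else 0) := by
  rw [Finset.card_filter, Finset.card_filter,
    ← Finset.sum_erase_add Finset.univ _ (Finset.mem_univ i),
    ← Finset.sum_erase_add Finset.univ (fun j => if q j then 1 else 0) (Finset.mem_univ i)]
  have hpe : ∑ j ∈ Finset.univ.erase i, (if p j then 1 else 0)
      = ∑ j ∈ Finset.univ.erase i, (if q j then 1 else 0) := by
    apply Finset.sum_congr rfl
    intro j hj
    have := hpq j (Finset.ne_of_mem_erase hj)
    simp only [this]
  omega

lemma mem_union_of_count_ne {a b : Multiset ℕ} {w : ℕ} (h : a.count w ≠ b.count w) :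
    w ∈ a.toFinset ∪ b.toFinset := by
  rcases Nat.eq_zero_or_pos (a.count w) with h0 | hp
  · have : 0 < b.count w := by omega
    exact Finset.mem_union_right _ (Multiset.mem_toFinset.mpr (Multiset.count_pos.mp this))
  · exact Finset.mem_union_left _ (Multiset.mem_toFinset.mpr (Multiset.count_pos.mp hp))

lemma mlt_of_witness {a b : Multiset ℕ} (v0 : ℕ)
    (h1 : a.count v0 < b.count v0) (h2 : ∀ w, v0 < w → a.count w ≤ b.count w) :
    MLt a b := by
  classical
  set T := (a.toFinset ∪ b.toFinset).filter (fun w => a.count w ≠ b.count w ∧ v0 ≤ w) with hT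
  have hv0T : v0 ∈ T := by
    rw [hT, Finset.mem_filter]
    exact ⟨mem_union_of_count_ne (by omega), by omega, le_rfl⟩
  have hTne : T.Nonempty := ⟨v0, hv0T⟩
  set w0 := T.max' hTne with hw0
  have hw0T : w0 ∈ T := T.max'_mem hTne
  rw [hT, Finset.mem_filter] at hw0T
  obtain ⟨-, hne, hle⟩ := hw0T
  apply mlt_of_char
  refine ⟨w0, ?_, fun w hw => ?_⟩
  · rcases eq_or_lt_of_le hle with heq | hlt
    · rw [← heq]; exact h1
    · exact lt_of_le_of_ne (h2 _ hlt) hne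
  · by_contra hcne
    have hwT : w ∈ T := by
      rw [hT, Finset.mem_filter]
      exact ⟨mem_union_of_count_ne hcne, hcne, by omega⟩
    exact absurd (Finset.le_max' T w hwT) (by omega)

lemma mle_or_mlt (a b : Multiset ℕ) : MLe a b ∨ MLt b a := by
  classical
  rcases eq_or_ne a b with rfl | hab
  · exact Or.inl (Or.inr rfl)
  · set T := (a.toFinset ∪ b.toFinset).filter (fun w => a.count w ≠ b.count w) with hT
    have hTne : T.Nonempty := by
      have : ∃ w, a.count w ≠ b.count w := by
        by_contra hc
        push_neg at hc
        exact hab (Multiset.ext.mpr hc)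
      obtain ⟨w, hw⟩ := this
      exact ⟨w, by rw [hT, Finset.mem_filter]; exact ⟨mem_union_of_count_ne hw, hw⟩⟩
    set w0 := T.max' hTne with hw0
    have hw0T : w0 ∈ T := T.max'_mem hTne
    rw [hT, Finset.mem_filter] at hw0T
    have habove : ∀ w, w0 < w → a.count w = b.count w := by
      intro w hw
      by_contra hcne
      have hwT : w ∈ T := by
        rw [hT, Finset.mem_filter]
        exact ⟨mem_union_of_count_ne hcne, hcne⟩
      exact absurd (Finset.le_max' T w hwT) (by omega)
    rcases lt_or_gt_of_ne hw0T.2 with hlt | hgt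
    · exact Or.inl (Or.inl (mlt_of_char ⟨w0, hlt, habove⟩))
    · exact Or.inr (mlt_of_char ⟨w0, hgt, fun w hw => (habove w hw).symm⟩)

lemma not_mle_iff {a b : Multiset ℕ} : ¬ MLe a b ↔ MLt b a :=
  ⟨fun h => (mle_or_mlt a b).resolve_left h, not_mle_of_mlt⟩

/-- Characterization of consistency of `v` for `Y i` by the canonical assignment. -/
lemma consY_iff {n : ℕ} (DX DY : Fin n → Finset ℕ)
    (hDX : ∀ i, (DX i).Nonempty) (hDY : ∀ i, (DY i).Nonempty) (i : Fin n) (v : ℕ) :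
    ConsY DX DY i v ↔ v ∈ DY i ∧
      MLe (msetOf fun j => (DX j).min' (hDX j))
          (msetOf fun j => if j = i then v else (DY j).max' (hDY j)) := by
  constructor
  · rintro ⟨x, y, ⟨hx, hy, hle⟩, hyi⟩
    refine ⟨hyi ▸ hy i, ?_⟩
    have h1 : MLe (msetOf fun j => (DX j).min' (hDX j)) (msetOf x) :=
      mle_msetOf_mono _ _ fun j => Finset.min'_le _ _ (hx j)
    have h2 : MLe (msetOf y) (msetOf fun j => if j = i then v else (DY j).max' (hDY j)) := by
      apply mle_msetOf_mono
      intro j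
      rcases eq_or_ne j i with rfl | hne
      · simp [hyi]
      · simp only [if_neg hne]
        exact Finset.le_max' _ _ (hy j)
    exact mle_trans (mle_trans h1 hle) h2
  · rintro ⟨hv, hle⟩
    refine ⟨_, _, ⟨fun j => Finset.min'_mem _ _, fun j => ?_, hle⟩, if_pos rfl⟩
    rcases eq_or_ne j i with rfl | hne
    · simpa using hv
    · simp only [if_neg hne]
      exact Finset.max'_mem _ _

/-- Theorem 8 of the paper (values of `Y i` when `max(DY i) = α` and `min(DY i) ≤ β`). -/
theorem stmt12 (n : ℕ) (hn : 1 ≤ n) (DX DY : Fin n → Finset ℕ)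
    (hDX : ∀ i, (DX i).Nonempty) (hDY : ∀ i, (DY i).Nonempty)
    (α : ℕ)
    (hα1 : cx DX hDX α < cy DY hDY α)
    (hα2 : ∀ b : ℕ, α < b → cx DX hDX b = cy DY hDY b)
    (β : ℕ) (hβα : β < α)
    (hβ1 : cy DY hDY β < cx DX hDX β)
    (hβ2 : ∀ v : ℕ, β < v → v < α → cx DX hDX v ≤ cy DY hDY v)
    (γ : Prop) (hγ : γ ↔ (β = α - 1 ∨ ∀ v : ℕ, β < v → v < α → cx DX hDX v = cy DY hDY v))
    (σ : Prop) (hσ : σ ↔ ∃ a : ℕ, a < β ∧ cy DY hDY a < cx DX hDX a ∧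
      ∀ w : ℕ, a < w → w < β → cx DX hDX w = cy DY hDY w)
    (i : Fin n) (hmax : (DY i).max' (hDY i) = α) (hmin : (DY i).min' (hDY i) ≤ β) :
    (∀ v ∈ DY i, β < v → ConsY DX DY i v) ∧
    (∀ v ∈ DY i, v < β →
      (¬ ConsY DX DY i v ↔ cx DX hDX α + 1 = cy DY hDY α ∧ γ)) ∧
    (β ∈ DY i →
      (¬ ConsY DX DY i β ↔
        cx DX hDX α + 1 = cy DY hDY α ∧ γ ∧
          (cy DY hDY β + 1 < cx DX hDX β ∨
           (cx DX hDX β = cy DY hDY β + 1 ∧ σ)))) := by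
  have hcA : ∀ w, (msetOf fun j => (DX j).min' (hDX j)).count w = cx DX hDX w := by
    intro w; rw [count_msetOf]; rfl
  have hcB : ∀ v w,
      (msetOf fun j => if j = i then v else (DY j).max' (hDY j)).count w
          + (if α = w then 1 else 0)
        = cy DY hDY w + (if v = w then 1 else 0) := by
    intro v w
    rw [count_msetOf]
    have h := card_filter_split i
      (fun j => (if j = i then v else (DY j).max' (hDY j)) = w)
      (fun j => (DY j).max' (hDY j) = w)
      (fun j hj => by simp only [if_neg hj])
    simp only [eq_self_iff_true, if_true, hmax] at h
    exact h
  have hB1 : ∀ v w, α ≠ w → v ≠ w →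
      (msetOf fun j => if j = i then v else (DY j).max' (hDY j)).count w
        = cy DY hDY w := by
    intro v w h1 h2
    have h := hcB v w
    rw [if_neg h1, if_neg h2] at h
    omega
  have hUpper : ∀ v w, β < w → v < w →
      cx DX hDX w ≤
        (msetOf fun j => if j = i then v else (DY j).max' (hDY j)).count w := by
    intro v w hβw hvw
    rcases eq_or_ne α w with heq | hne
    · have h := hcB v w
      rw [if_pos heq, if_neg (show ¬ v = w by omega)] at h
      have hh : cx DX hDX w < cy DY hDY w := heq ▸ hα1
      omega
    · have h := hB1 v w hne (by omega)
      rcases lt_trichotomy w α with h' | h' | h'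
      · have := hβ2 w hβw h'; omega
      · exact absurd h'.symm hne
      · have := hα2 w h'; omega
  have hAbove : ∀ v, v ≤ β → cx DX hDX α + 1 = cy DY hDY α →
      (β = α - 1 ∨ ∀ w : ℕ, β < w → w < α → cx DX hDX w = cy DY hDY w) →
      ∀ w, β < w →
        (msetOf fun j => if j = i then v else (DY j).max' (hDY j)).count w
          = (msetOf fun j => (DX j).min' (hDX j)).count w := by
    intro v hvβ hP hγ' w hw
    rw [hcA w]
    rcases eq_or_ne α w with heq | hne
    · have h := hcB v w
      rw [if_pos heq, if_neg (show ¬ v = w by omega)] at h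
      have hh : cx DX hDX w + 1 = cy DY hDY w := heq ▸ hP
      omega
    · have h := hB1 v w hne (show v ≠ w by omega)
      rcases lt_trichotomy w α with h' | h' | h'
      · rcases hγ' with hγ' | hγ'
        · omega
        · have := hγ' w hw h'; omega
      · exact absurd h'.symm hne
      · have := hα2 w h'; omega
  refine ⟨?_, ?_, ?_⟩
  · -- part 1
    intro v hv hβv
    have hvα : v ≤ α := by
      have h := Finset.le_max' (DY i) v hv
      rwa [hmax] at h
    rw [consY_iff DX DY hDX hDY]
    refine ⟨hv, Or.inl ?_⟩
    apply mlt_of_witness v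
    · rw [hcA v]
      rcases eq_or_ne α v with heq | hne
      · have h := hcB v v
        rw [if_pos heq, if_pos rfl] at h
        have hh : cx DX hDX v < cy DY hDY v := heq ▸ hα1
        omega
      · have h := hcB v v
        rw [if_neg hne, if_pos rfl] at h
        have := hβ2 v hβv (by omega)
        omega
    · intro w hw
      rw [hcA w]
      exact hUpper v w (by omega) hw
  · -- part 2
    intro v hv hvβ
    rw [consY_iff DX DY hDX hDY]
    have hsimp : ¬ (v ∈ DY i ∧
        MLe (msetOf fun j => (DX j).min' (hDX j))
            (msetOf fun j => if j = i then v else (DY j).max' (hDY j))) ↔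
        ¬ MLe (msetOf fun j => (DX j).min' (hDX j))
            (msetOf fun j => if j = i then v else (DY j).max' (hDY j)) := by
      simp [hv]
    rw [hsimp, not_mle_iff]
    constructor
    · intro h
      by_contra hno
      refine mlt_asymm ?_ h
      by_cases hP : cx DX hDX α + 1 = cy DY hDY α
      · have hnγ : ¬ γ := fun hg => hno ⟨hP, hg⟩
        rw [hγ] at hnγ
        push_neg at hnγ
        obtain ⟨-, w, hw1, hw2, hw3⟩ := hnγ
        have hww := hβ2 w hw1 hw2
        apply mlt_of_witness w
        · rw [hcA w]
          have h2 := hB1 v w (by omega) (by omega)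
          omega
        · intro u hu
          rw [hcA u]
          exact hUpper v u (by omega) (by omega)
      · apply mlt_of_witness α
        · rw [hcA α]
          have h2 := hcB v α
          rw [if_pos rfl, if_neg (show ¬ v = α by omega)] at h2
          omega
        · intro u hu
          rw [hcA u]
          exact hUpper v u (by omega) (by omega)
    · rintro ⟨hP, hγ'⟩
      rw [hγ] at hγ'
      apply mlt_of_witness β
      · rw [hcA β]
        have h2 := hB1 v β (by omega) (by omega)
        omega
      · intro w hw
        exact le_of_eq (hAbove v (by omega) hP hγ' w hw)
  · -- part 3
    intro hv
    rw [consY_iff DX DY hDX hDY]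
    have hsimp : ¬ (β ∈ DY i ∧
        MLe (msetOf fun j => (DX j).min' (hDX j))
            (msetOf fun j => if j = i then β else (DY j).max' (hDY j))) ↔
        ¬ MLe (msetOf fun j => (DX j).min' (hDX j))
            (msetOf fun j => if j = i then β else (DY j).max' (hDY j)) := by
      simp [hv]
    rw [hsimp, not_mle_iff]
    have hBβ : (msetOf fun j => if j = i then β else (DY j).max' (hDY j)).count β
        = cy DY hDY β + 1 := by
      have h := hcB β β
      rw [if_neg (show ¬ α = β by omega), if_pos rfl] at h
      omega
    constructor
    · intro h
      by_contra hno
      by_cases hP : cx DX hDX α + 1 = cy DY hDY α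
      · by_cases hγ' : γ
        · have hnd : ¬ (cy DY hDY β + 1 < cx DX hDX β ∨
              (cx DX hDX β = cy DY hDY β + 1 ∧ σ)) := fun hd => hno ⟨hP, hγ', hd⟩
          push_neg at hnd
          obtain ⟨hd1, hd2⟩ := hnd
          have hβeq : cx DX hDX β = cy DY hDY β + 1 := by omega
          have hnσ : ¬ σ := hd2 hβeq
          rw [hσ] at hnσ
          push_neg at hnσ
          obtain ⟨u, hu1, hu2⟩ := char_of_mlt h
          rw [hγ] at hγ'
          have hgeq : ∀ w, β ≤ w →
              (msetOf fun j => if j = i then β else (DY j).max' (hDY j)).count w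
                = (msetOf fun j => (DX j).min' (hDX j)).count w := by
            intro w hw
            rcases eq_or_lt_of_le hw with heq | hw'
            · rw [← heq, hBβ, hcA β]
              omega
            · exact hAbove β le_rfl hP hγ' w hw'
          have huβ : u < β := by
            by_contra hub
            have := hgeq u (by omega)
            omega
          have hcyu : cy DY hDY u < cx DX hDX u := by
            have h2 := hB1 β u (by omega) (by omega)
            rw [hcA u] at hu1
            omega
          obtain ⟨w, hw1, hw2, hw3⟩ := hnσ u huβ hcyu
          have heqw := hu2 w (by omega)
          have h2 := hB1 β w (by omega) (by omega)
          rw [hcA w] at heqw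
          omega
        · refine mlt_asymm ?_ h
          have hnγ := hγ'
          rw [hγ] at hnγ
          push_neg at hnγ
          obtain ⟨-, w, hw1, hw2, hw3⟩ := hnγ
          have hww := hβ2 w hw1 hw2
          apply mlt_of_witness w
          · rw [hcA w]
            have h2 := hB1 β w (by omega) (by omega)
            omega
          · intro u hu
            rw [hcA u]
            exact hUpper β u (by omega) (by omega)
      · refine mlt_asymm ?_ h
        apply mlt_of_witness α
        · rw [hcA α]
          have h2 := hcB β α
          rw [if_pos rfl, if_neg (show ¬ β = α by omega)] at h2
          omega
        · intro u hu
          rw [hcA u]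
          exact hUpper β u (by omega) (by omega)
    · rintro ⟨hP, hγ', hD⟩
      rw [hγ] at hγ'
      rcases hD with hD | ⟨hD, hσ'⟩
      · apply mlt_of_witness β
        · rw [hcA β, hBβ]
          omega
        · intro w hw
          exact le_of_eq (hAbove β le_rfl hP hγ' w hw)
      · rw [hσ] at hσ'
        obtain ⟨a, ha1, ha2, ha3⟩ := hσ'
        apply mlt_of_witness a
        · rw [hcA a]
          have h2 := hB1 β a (by omega) (by omega)
          omega
        · intro w hw
          rcases lt_trichotomy w β with h' | heq | h'
          · rw [hcA w]
            have h2 := hB1 β w (by omega) (by omega)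
            have := ha3 w hw h'
            omega
          · rw [heq, hBβ, hcA β]
            omega
          · exact le_of_eq (hAbove β le_rfl hP hγ' w h')


end MsetPaper
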